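/- Let k <= n. For S = {s_1 < ... < s_r} a subset of {1,...,n}, define the skip monomial x(S) = x_{s_1}^{s_1} x_{s_2}^{s_2 - 1} ... x_{s_r}^{s_r - r + 1}. The number of monomials m in x_1,...,x_n such that x_i^k does not divide m for all i and x(S) does not divide m for all subsets S of size n-k+1 equals k! * S(n,k). -/

import Mathlib

/-- Stirling numbers of the second kind. -/
def stirling : ℕ → ℕ → ℕ
  | 0, 0 => 1
  | 0, _ + 1 => 0
  | _ + 1, 0 => 0
  | n + 1, k + 1 => stirling n k + (k + 1) * stirling n (k + 1)

/-- The exponent of `x_i` in the skip monomial `x(S) = x_{s₁}^{s₁} x_{s₂}^{s₂-1} ⋯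
x_{s_r}^{s_r-r+1}`, where `S = {s₁ < ⋯ < s_r}` (positions recorded 0-indexed, values of the
letters 1-indexed). -/
def skipExp (n : ℕ) (S : Finset (Fin n)) (i : Fin n) : ℕ :=
  if i ∈ S then (i : ℕ) + 1 - (S.filter (· < i)).card else 0

/-- extension of a finite sequence to ℕ by zeros -/
def extN {n : ℕ} (a : Fin n → ℕ) : ℕ → ℕ := fun p => if h : p < n then a ⟨p, h⟩ else 0

/-- greedy counter -/
def DD (f : ℕ → ℕ) (c : ℕ) : ℕ → ℕ
  | 0 => c
  | p + 1 => DD f c p + if f p ≤ DD f c p then 1 else 0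

lemma DD_le (f : ℕ → ℕ) (c : ℕ) : ∀ p, DD f c p ≤ c + p := by
  intro p
  induction p with
  | zero => simp [DD]
  | succ p ih => simp only [DD]; split <;> omega

lemma DD_shift (f g : ℕ → ℕ) (h : ∀ p, f (p + 1) = g p) (c : ℕ) :
    ∀ p, DD f c (p + 1) = DD g (c + if f 0 ≤ c then 1 else 0) p := by
  intro p
  induction p with
  | zero => simp [DD]; rfl
  | succ p ih =>
      show DD f c (p + 1) + (if f (p + 1) ≤ DD f c (p + 1) then 1 else 0)
          = DD g (c + if f 0 ≤ c then 1 else 0) (p + 1)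
      rw [ih, h p]
      rfl

lemma extN_cons_zero {n : ℕ} (x : ℕ) (g : Fin n → ℕ) :
    extN (Fin.cons x g : Fin (n + 1) → ℕ) 0 = x := by
  simp [extN]

lemma extN_cons_succ {n : ℕ} (x : ℕ) (g : Fin n → ℕ) (p : ℕ) :
    extN (Fin.cons x g : Fin (n + 1) → ℕ) (p + 1) = extN g p := by
  unfold extN
  by_cases h : p < n
  · rw [dif_pos (Nat.succ_lt_succ h), dif_pos h]
    exact Fin.cons_succ (α := fun _ => ℕ) x g ⟨p, h⟩
  · rw [dif_neg (by omega), dif_neg h]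

lemma card_filter_lt_succ {n : ℕ} (S : Finset (Fin n)) (p : ℕ) (hp : p < n) :
    (S.filter (fun s : Fin n => (s : ℕ) < p + 1)).card
      = (S.filter (fun s : Fin n => (s : ℕ) < p)).card + if (⟨p, hp⟩ : Fin n) ∈ S then 1 else 0 := by
  have hdisj : Disjoint (S.filter (fun s : Fin n => (s : ℕ) < p))
      (S.filter (fun s : Fin n => s = ⟨p, hp⟩)) := by
    rw [Finset.disjoint_left]
    intro s h1 h2
    rw [Finset.mem_filter] at h1 h2
    rw [h2.2] at h1
    exact absurd h1.2 (by simp)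
  have hset : S.filter (fun s : Fin n => (s : ℕ) < p + 1)
      = S.filter (fun s : Fin n => (s : ℕ) < p) ∪ S.filter (fun s : Fin n => s = ⟨p, hp⟩) := by
    ext s
    simp only [Finset.mem_filter, Finset.mem_union]
    constructor
    · rintro ⟨hs, hlt⟩
      rcases Nat.lt_succ_iff_lt_or_eq.mp hlt with h | h
      · exact Or.inl ⟨hs, h⟩
      · exact Or.inr ⟨hs, Fin.ext h⟩
    · rintro (⟨hs, h⟩ | ⟨hs, h⟩)
      · exact ⟨hs, Nat.lt_succ_of_lt h⟩
      · exact ⟨hs, by rw [h]; exact Nat.lt_succ_self p⟩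
  rw [hset, Finset.card_union_of_disjoint hdisj, Finset.filter_eq']
  congr 1
  split_ifs <;> simp

lemma extN_val {n : ℕ} (a : Fin n → ℕ) (p : ℕ) (hp : p < n) : extN a p = a ⟨p, hp⟩ :=
  dif_pos hp

lemma filter_lt_fin_eq {n : ℕ} (S : Finset (Fin n)) (i : Fin n) :
    S.filter (· < i) = S.filter (fun s : Fin n => (s : ℕ) < (i : ℕ)) := rfl

lemma adir {n k : ℕ} (hk : 0 < k) (hkn : k ≤ n) (a : Fin n → ℕ) (S : Finset (Fin n))
    (hcard : S.card = n - k + 1) (hdvd : ∀ i, skipExp n S i ≤ a i) :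
    DD (extN a) 0 n < k := by
  have key : ∀ p, p ≤ n → (S.filter (fun s : Fin n => (s : ℕ) < p)).card + DD (extN a) 0 p ≤ p := by
    intro p
    induction p with
    | zero => simp [DD]
    | succ p ih =>
        intro hp
        have hp' : p < n := hp
        have ih' := ih (Nat.le_of_lt hp)
        rw [card_filter_lt_succ S p hp']
        have hDD : DD (extN a) 0 (p + 1)
            = DD (extN a) 0 p + if a ⟨p, hp'⟩ ≤ DD (extN a) 0 p then 1 else 0 := by
          simp only [DD, extN_val a p hp']
        rw [hDD]
        by_cases hmem : (⟨p, hp'⟩ : Fin n) ∈ S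
        · have h0 := hdvd ⟨p, hp'⟩
          rw [skipExp, if_pos hmem, filter_lt_fin_eq] at h0
          have h1 : p + 1 - (S.filter (fun s : Fin n => (s : ℕ) < p)).card ≤ a ⟨p, hp'⟩ := h0
          by_cases hc : a ⟨p, hp'⟩ ≤ DD (extN a) 0 p
          · rw [if_pos hc, if_pos hmem]
            omega
          · rw [if_neg hc, if_pos hmem]
            omega
        · rw [if_neg hmem]
          split_ifs <;> omega
  have hfin := key n le_rfl
  rw [Finset.filter_true_of_mem (fun s _ => s.isLt), hcard] at hfin
  omega

lemma init_seg {n : ℕ} (T : Finset (Fin n)) (m : ℕ) (hm : m ≤ T.card) :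
    ∃ S : Finset (Fin n), S ⊆ T ∧ S.card = m ∧
      ∀ i ∈ S, S.filter (· < i) = T.filter (· < i) := by
  set r : Fin n → ℕ := fun s => (T.filter (· < s)).card with hr
  have hmono : ∀ s ∈ T, ∀ t ∈ T, s < t → r s < r t := by
    intro s hs t ht hst
    have hsub : insert s (T.filter (· < s)) ⊆ T.filter (· < t) := by
      intro u hu
      rcases Finset.mem_insert.mp hu with rfl | hu
      · exact Finset.mem_filter.mpr ⟨hs, hst⟩
      · obtain ⟨huT, hus⟩ := Finset.mem_filter.mp hu
        exact Finset.mem_filter.mpr ⟨huT, lt_trans hus hst⟩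
    have hnot : s ∉ T.filter (· < s) := by simp
    have hle := Finset.card_le_card hsub
    rw [Finset.card_insert_of_notMem hnot] at hle
    simp only [hr]
    omega
  have hinj : Set.InjOn r T := by
    intro s hs t ht hst
    by_contra hne
    rcases lt_or_gt_of_ne hne with h | h
    · exact absurd hst (Nat.ne_of_lt (hmono s hs t ht h))
    · exact absurd hst.symm (Nat.ne_of_lt (hmono t ht s hs h))
  have hlt : ∀ s ∈ T, r s < T.card := by
    intro s hs
    apply Finset.card_lt_card
    rw [Finset.ssubset_iff_of_subset (Finset.filter_subset _ _)]
    exact ⟨s, hs, by simp⟩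
  have himg : T.image r = Finset.range T.card := by
    apply Finset.eq_of_subset_of_card_le
    · intro x hx
      obtain ⟨s, hs, rfl⟩ := Finset.mem_image.mp hx
      exact Finset.mem_range.mpr (hlt s hs)
    · rw [Finset.card_range, Finset.card_image_of_injOn hinj]
  set S := T.filter (fun s : Fin n => r s < m) with hS
  have hsub : S ⊆ T := Finset.filter_subset _ _
  refine ⟨S, hsub, ?_, ?_⟩
  · have himgS : S.image r = Finset.range m := by
      have h1 : S.image r = (T.image r).filter (· < m) := by
        ext x
        simp only [hS, Finset.mem_image, Finset.mem_filter]
        constructor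
        · rintro ⟨s, hs, rfl⟩
          exact ⟨⟨s, hs.1, rfl⟩, hs.2⟩
        · rintro ⟨⟨s, hs, rfl⟩, hx⟩
          exact ⟨s, ⟨hs, hx⟩, rfl⟩
      rw [h1, himg]
      ext x
      simp only [Finset.mem_filter, Finset.mem_range]
      omega
    have hci := Finset.card_image_of_injOn (hinj.mono (Finset.coe_subset.mpr hsub))
    rw [himgS, Finset.card_range] at hci
    omega
  · intro i hi
    obtain ⟨hiT, hrm⟩ := Finset.mem_filter.mp hi
    ext t
    simp only [hS, Finset.mem_filter]
    constructor
    · rintro ⟨⟨h1, _⟩, h2⟩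
      exact ⟨h1, h2⟩
    · rintro ⟨htT, hti⟩
      exact ⟨⟨htT, lt_trans (hmono t htT i hiT hti) hrm⟩, hti⟩

lemma bdir {n k : ℕ} (hkn : k ≤ n) (a : Fin n → ℕ) (h : DD (extN a) 0 n < k) :
    ∃ S : Finset (Fin n), S.card = n - k + 1 ∧ ∀ i, skipExp n S i ≤ a i := by
  set T := Finset.univ.filter (fun q : Fin n => DD (extN a) 0 (q : ℕ) < a q) with hT
  have hC1 : ∀ p, p ≤ n → (T.filter (fun s : Fin n => (s : ℕ) < p)).card + DD (extN a) 0 p = p := by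
    intro p
    induction p with
    | zero => simp [DD]
    | succ p ih =>
        intro hp
        have hp' : p < n := hp
        have ih' := ih (Nat.le_of_lt hp)
        rw [card_filter_lt_succ T p hp']
        have hDD : DD (extN a) 0 (p + 1)
            = DD (extN a) 0 p + if a ⟨p, hp'⟩ ≤ DD (extN a) 0 p then 1 else 0 := by
          simp only [DD, extN_val a p hp']
        have hmemiff : ((⟨p, hp'⟩ : Fin n) ∈ T) ↔ DD (extN a) 0 p < a ⟨p, hp'⟩ := by
          simp [hT]
        rw [hDD]
        by_cases hc : a ⟨p, hp'⟩ ≤ DD (extN a) 0 p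
        · rw [if_pos hc, if_neg (fun hmem => absurd (hmemiff.mp hmem) (by omega))]
          omega
        · rw [if_neg hc, if_pos (hmemiff.mpr (by omega))]
          omega
  have hTcard : T.card + DD (extN a) 0 n = n := by
    have hfin := hC1 n le_rfl
    rwa [Finset.filter_true_of_mem (fun s _ => s.isLt)] at hfin
  obtain ⟨S, hST, hScard, hSfilt⟩ := init_seg T (n - k + 1) (by omega)
  refine ⟨S, hScard, fun i => ?_⟩
  by_cases hi : i ∈ S
  · rw [skipExp, if_pos hi, hSfilt i hi]
    have hmemT : DD (extN a) 0 (i : ℕ) < a i := by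
      have := hST hi
      rw [hT, Finset.mem_filter] at this
      exact this.2
    have hcnt := hC1 (i : ℕ) (Nat.le_of_lt i.isLt)
    rw [filter_lt_fin_eq]
    omega
  · rw [skipExp, if_neg hi]
    exact Nat.zero_le _

lemma keyiff {n k : ℕ} (hk : 0 < k) (hkn : k ≤ n) (a : Fin n → ℕ) :
    ((∀ i, a i < k) ∧ ∀ S : Finset (Fin n), S.card = n - k + 1 → ¬ (∀ i, skipExp n S i ≤ a i))
      ↔ ((∀ i, a i < k) ∧ k ≤ DD (extN a) 0 n) := by
  apply and_congr_right
  intro _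
  constructor
  · intro hns
    by_contra hlt
    obtain ⟨S, hcard, hdvd⟩ := bdir hkn a (by omega)
    exact hns S hcard hdvd
  · intro hD S hcard hdvd
    exact absurd (adir hk hkn a S hcard hdvd) (by omega)

lemma card_pred_cons {k n : ℕ} (P : (Fin (n + 1) → Fin k) → Prop) [DecidablePred P] :
    Fintype.card {b // P b} = ∑ v : Fin k, Fintype.card {b' : Fin n → Fin k // P (Fin.cons v b')} := by
  rw [← Fintype.card_sigma]
  apply Fintype.card_congr
  exact
    { toFun := fun x => ⟨x.1 0, ⟨Fin.tail x.1, by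
        have h : Fin.cons (x.1 0) (Fin.tail x.1) = x.1 := Fin.cons_self_tail x.1
        rw [h]; exact x.2⟩⟩
      invFun := fun y => ⟨Fin.cons y.1 y.2.1, y.2.2⟩
      left_inv := fun x => Subtype.ext (Fin.cons_self_tail x.1)
      right_inv := fun y => rfl }

lemma card_fin_le (k c : ℕ) :
    ((Finset.univ : Finset (Fin k)).filter (fun v : Fin k => (v : ℕ) ≤ c)).card
      = min (c + 1) k := by
  have h1 : ((Finset.univ : Finset (Fin k)).filter (fun v : Fin k => (v : ℕ) ≤ c)).image Fin.val
      = (Finset.range k).filter (fun x => x ≤ c) := by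
    ext x
    simp only [Finset.mem_image, Finset.mem_filter, Finset.mem_univ, true_and, Finset.mem_range]
    constructor
    · rintro ⟨v, hv, rfl⟩
      exact ⟨v.isLt, hv⟩
    · rintro ⟨hx, hxc⟩
      exact ⟨⟨x, hx⟩, hxc, rfl⟩
  have h2 := Finset.card_image_of_injective
    ((Finset.univ : Finset (Fin k)).filter (fun v : Fin k => (v : ℕ) ≤ c)) Fin.val_injective
  rw [h1] at h2
  rw [← h2]
  have h3 : (Finset.range k).filter (fun x => x ≤ c) = Finset.range (min (c + 1) k) := by
    ext x
    simp only [Finset.mem_filter, Finset.mem_range, lt_min_iff]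
    omega
  rw [h3, Finset.card_range]

lemma sumid (k n c : ℕ) :
    (∑ j ∈ Finset.range (k + 1),
        if k ≤ c + j then k.choose j * j.factorial * stirling (n + 1) j else 0)
      = min (c + 1) k * (∑ j ∈ Finset.range (k + 1),
            if k ≤ c + 1 + j then k.choose j * j.factorial * stirling n j else 0)
        + (k - min (c + 1) k) * (∑ j ∈ Finset.range (k + 1),
            if k ≤ c + j then k.choose j * j.factorial * stirling n j else 0) := by
  have hA : ∀ i, i < k → k.choose (i + 1) * (i + 1).factorial * stirling n i
      = (k - i) * (k.choose i * i.factorial * stirling n i) := by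
    intro i _
    have hch : k.choose (i + 1) * (i + 1) = k.choose i * (k - i) := Nat.choose_succ_right_eq k i
    calc k.choose (i + 1) * (i + 1).factorial * stirling n i
        = (k.choose (i + 1) * (i + 1)) * (i.factorial * stirling n i) := by
          rw [Nat.factorial_succ]; ring
      _ = (k.choose i * (k - i)) * (i.factorial * stirling n i) := by rw [hch]
      _ = (k - i) * (k.choose i * i.factorial * stirling n i) := by ring
  have step1 : (∑ j ∈ Finset.range (k + 1),
        if k ≤ c + j then k.choose j * j.factorial * stirling (n + 1) j else 0)
      = (∑ j ∈ Finset.range (k + 1),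
            if k ≤ c + 1 + j then (k - j) * (k.choose j * j.factorial * stirling n j) else 0)
        + (∑ j ∈ Finset.range (k + 1),
            if k ≤ c + j then j * (k.choose j * j.factorial * stirling n j) else 0) := by
    rw [Finset.sum_range_succ'
      (fun j => if k ≤ c + j then k.choose j * j.factorial * stirling (n + 1) j else 0) k]
    have h0 : (if k ≤ c + 0 then k.choose 0 * Nat.factorial 0 * stirling (n + 1) 0 else 0) = 0 := by
      have h00 : stirling (n + 1) 0 = 0 := rfl
      rw [h00]; simp
    rw [h0, add_zero]
    have hterm : ∀ i ∈ Finset.range k,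
        (if k ≤ c + (i + 1) then k.choose (i + 1) * (i + 1).factorial * stirling (n + 1) (i + 1) else 0)
          = (if k ≤ c + 1 + i then (k - i) * (k.choose i * i.factorial * stirling n i) else 0)
            + (if k ≤ c + (i + 1) then (i + 1) * (k.choose (i + 1) * (i + 1).factorial * stirling n (i + 1)) else 0) := by
      intro i hi
      have hik : i < k := Finset.mem_range.mp hi
      have hstir : stirling (n + 1) (i + 1) = stirling n i + (i + 1) * stirling n (i + 1) := rfl
      by_cases hc : k ≤ c + (i + 1)
      · rw [if_pos hc, if_pos (show k ≤ c + 1 + i by omega), if_pos hc, hstir, Nat.mul_add,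
          hA i hik]
        ring
      · rw [if_neg hc, if_neg (show ¬ k ≤ c + 1 + i by omega), if_neg hc]
    rw [Finset.sum_congr rfl hterm, Finset.sum_add_distrib]
    congr 1
    · rw [Finset.sum_range_succ
        (fun j => if k ≤ c + 1 + j then (k - j) * (k.choose j * j.factorial * stirling n j) else 0) k]
      simp
    · rw [Finset.sum_range_succ'
        (fun j => if k ≤ c + j then j * (k.choose j * j.factorial * stirling n j) else 0) k]
      simp
  rw [step1, Finset.mul_sum, Finset.mul_sum, ← Finset.sum_add_distrib, ← Finset.sum_add_distrib]
  apply Finset.sum_congr rfl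
  intro j hj
  have hjk : j ≤ k := by have := Finset.mem_range.mp hj; omega
  rw [mul_ite, mul_ite, Nat.mul_zero, Nat.mul_zero]
  generalize k.choose j * j.factorial * stirling n j = t
  by_cases h1 : k ≤ c + 1 + j <;> by_cases h2 : k ≤ c + j
  · rw [if_pos h1, if_pos h2, if_pos h1, if_pos h2, ← Nat.add_mul, ← Nat.add_mul]
    congr 1
    omega
  · rw [if_pos h1, if_neg h2, if_pos h1, if_neg h2, add_zero, add_zero]
    congr 1
    omega
  · omega
  · rw [if_neg h1, if_neg h2, if_neg h1, if_neg h2]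

lemma cons_coe {k n : ℕ} (v : Fin k) (b' : Fin n → Fin k) :
    (fun i => ((Fin.cons v b' : Fin (n + 1) → Fin k) i : ℕ))
      = Fin.cons (v : ℕ) (fun i => (b' i : ℕ)) := by
  funext i
  refine Fin.cases ?_ ?_ i
  · simp
  · intro j
    simp

lemma main_count (k : ℕ) : ∀ n c : ℕ,
    Fintype.card {b : Fin n → Fin k // k ≤ DD (extN (fun i => (b i : ℕ))) c n}
      = ∑ j ∈ Finset.range (k + 1),
          if k ≤ c + j then k.choose j * j.factorial * stirling n j else 0 := by
  intro n
  induction n with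
  | zero =>
      intro c
      have hDD : ∀ b : Fin 0 → Fin k, DD (extN (fun i => (b i : ℕ))) c 0 = c := fun _ => rfl
      rcases le_or_gt k c with h | h
      · have h1 : ∀ b : Fin 0 → Fin k, k ≤ DD (extN (fun i => (b i : ℕ))) c 0 := by
          intro b; rw [hDD]; exact h
        rw [Fintype.card_subtype, Finset.filter_true_of_mem (fun x _ => h1 x), Finset.card_univ]
        have h2 : Fintype.card (Fin 0 → Fin k) = 1 := by simp
        rw [h2]
        rw [Finset.sum_eq_single_of_mem 0 (Finset.mem_range.mpr (by omega))]
        · rw [if_pos (by omega)]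
          simp [stirling]
        · intro b _ hb
          obtain ⟨b', rfl⟩ := Nat.exists_eq_succ_of_ne_zero hb
          have : stirling 0 (b' + 1) = 0 := rfl
          rw [this]
          simp
      · have h1 : ∀ b : Fin 0 → Fin k, ¬ k ≤ DD (extN (fun i => (b i : ℕ))) c 0 := by
          intro b; rw [hDD]; omega
        rw [Fintype.card_subtype, Finset.filter_false_of_mem (fun x _ => h1 x), Finset.card_empty]
        symm
        apply Finset.sum_eq_zero
        intro j _
        match j with
        | 0 => rw [if_neg (by omega)]
        | j' + 1 =>
            have : stirling 0 (j' + 1) = 0 := rfl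
            rw [this]
            simp
  | succ n ih =>
      intro c
      rw [card_pred_cons]
      have hstep : ∀ v : Fin k,
          Fintype.card {b' : Fin n → Fin k //
              k ≤ DD (extN (fun i => ((Fin.cons v b' : Fin (n + 1) → Fin k) i : ℕ))) c (n + 1)}
            = Fintype.card {b' : Fin n → Fin k //
              k ≤ DD (extN (fun i => (b' i : ℕ))) (c + if (v : ℕ) ≤ c then 1 else 0) n} := by
        intro v
        apply Fintype.card_congr
        apply Equiv.subtypeEquivRight
        intro b'
        rw [cons_coe]
        rw [DD_shift (extN (Fin.cons (v : ℕ) (fun i => (b' i : ℕ))))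
          (extN (fun i => (b' i : ℕ))) (extN_cons_succ _ _) c n]
        rw [extN_cons_zero]
      have h1 : (∑ v : Fin k, Fintype.card {b' : Fin n → Fin k //
          k ≤ DD (extN (fun i => ((Fin.cons v b' : Fin (n + 1) → Fin k) i : ℕ))) c (n + 1)})
          = ∑ v : Fin k, (if (v : ℕ) ≤ c
            then ∑ j ∈ Finset.range (k + 1),
              if k ≤ c + 1 + j then k.choose j * j.factorial * stirling n j else 0
            else ∑ j ∈ Finset.range (k + 1),
              if k ≤ c + j then k.choose j * j.factorial * stirling n j else 0) := by
        apply Finset.sum_congr rfl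
        intro v _
        rw [hstep v]
        by_cases hv : (v : ℕ) ≤ c
        · rw [if_pos hv, if_pos hv]
          exact ih (c + 1)
        · rw [if_neg hv, if_neg hv, Nat.add_zero]
          exact ih c
      have h2 : (∑ v : Fin k, (if (v : ℕ) ≤ c
            then ∑ j ∈ Finset.range (k + 1),
              if k ≤ c + 1 + j then k.choose j * j.factorial * stirling n j else 0
            else ∑ j ∈ Finset.range (k + 1),
              if k ≤ c + j then k.choose j * j.factorial * stirling n j else 0))
          = min (c + 1) k * (∑ j ∈ Finset.range (k + 1),
              if k ≤ c + 1 + j then k.choose j * j.factorial * stirling n j else 0)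
            + (k - min (c + 1) k) * (∑ j ∈ Finset.range (k + 1),
              if k ≤ c + j then k.choose j * j.factorial * stirling n j else 0) := by
        rw [Finset.sum_ite, Finset.sum_const, Finset.sum_const, card_fin_le, smul_eq_mul,
          smul_eq_mul]
        congr 2
        have htot := Finset.card_filter_add_card_filter_not
          (s := (Finset.univ : Finset (Fin k))) (p := fun v : Fin k => (v : ℕ) ≤ c)
        rw [card_fin_le] at htot
        rw [Finset.card_univ, Fintype.card_fin] at htot
        omega
      rw [h1, h2]
      exact (sumid k n c).symm


/-- The number of monomials `m` in `x₁, …, x_n` such that `x_i^k ∤ m` for all `i` and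
`x(S) ∤ m` for all `S ⊆ {1, …, n}` of size `n - k + 1` equals `k! · S(n,k)`. -/
theorem stmt10 (n k : ℕ) (hk : 0 < k) (hkn : k ≤ n) :
    Nat.card {a : Fin n → ℕ //
      (∀ i, a i < k) ∧
      ∀ S : Finset (Fin n), S.card = n - k + 1 → ¬ (∀ i, skipExp n S i ≤ a i)}
      = k.factorial * stirling n k := by
  have e1 : {a : Fin n → ℕ //
      (∀ i, a i < k) ∧
      ∀ S : Finset (Fin n), S.card = n - k + 1 → ¬ (∀ i, skipExp n S i ≤ a i)}
      ≃ {a : Fin n → ℕ // (∀ i, a i < k) ∧ k ≤ DD (extN a) 0 n} :=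
    Equiv.subtypeEquivRight (fun a => keyiff hk hkn a)
  have e2 : {a : Fin n → ℕ // (∀ i, a i < k) ∧ k ≤ DD (extN a) 0 n}
      ≃ {b : Fin n → Fin k // k ≤ DD (extN (fun i => (b i : ℕ))) 0 n} :=
    { toFun := fun x => ⟨fun i => ⟨x.1 i, x.2.1 i⟩, x.2.2⟩
      invFun := fun y => ⟨fun i => (y.1 i : ℕ), fun i => (y.1 i).isLt, y.2⟩
      left_inv := fun x => rfl
      right_inv := fun y => rfl }
  rw [Nat.card_congr (e1.trans e2), Nat.card_eq_fintype_card, main_count k n 0]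
  rw [Finset.sum_eq_single_of_mem k (Finset.mem_range.mpr (by omega))]
  · rw [if_pos (by omega), Nat.choose_self, one_mul]
  · intro b hbmem hbne
    have hb := Finset.mem_range.mp hbmem
    rw [if_neg (by omega)]
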